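/- Let L be Liouville's constant L = Σ_{n≥1} 10^{−n!} and α = (1, L). Define f_N(x,y) = sin(10^{N!}(Σ_{n=1}^{N} x·10^{−n!} − y)). Then for N ≥ 3: ‖f_N‖²_{L²(𝕋²)} = 2π², ‖∇f_N‖_{L²(𝕋²)} ≤ 6·10^{N!}, and ‖⟨∇f_N, α⟩‖_{L²(𝕋²)} = √(2π²)·Σ_{n=N+1}^∞ 10^{N!−n!} ≤ 10^{−2·N!}·√(2π²)·2. Consequently the inequality ‖∇f‖·‖⟨∇f,α⟩‖ ≥ c‖f‖² fails for α = (1, L) for every c > 0. -/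

import Mathlib

open Real

/- We model a mean-zero function `f ∈ H¹(𝕋²)` on the flat torus `𝕋² = ℝ²/(2πℤ)²`
by its Fourier coefficients `a : ℤ × ℤ → ℂ`, `f = Σ aₖ e^{ik·x}`, `a₀ = 0`.
By Parseval, `‖f‖²_{L²} = (2π)² Σ |aₖ|²`, `‖∇f‖²_{L²} = (2π)² Σ |k|²|aₖ|²` and
`‖⟨∇f,α⟩‖²_{L²} = (2π)² Σ ⟨k,α⟩²|aₖ|²`.  All inequalities below are homogeneous
in the number of `L²`-norm factors, so the constant `(2π)²` is harmlessly dropped. -/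

/-- `‖f‖²_{L²(𝕋²)}` (modulo the factor `(2π)²`). -/
noncomputable def normSq (a : ℤ × ℤ → ℂ) : ℝ := ∑' k : ℤ × ℤ, ‖a k‖ ^ 2

/-- `‖∇f‖²_{L²(𝕋²)}` (modulo the factor `(2π)²`). -/
noncomputable def gradSq (a : ℤ × ℤ → ℂ) : ℝ :=
  ∑' k : ℤ × ℤ, (((k.1 : ℝ)) ^ 2 + ((k.2 : ℝ)) ^ 2) * ‖a k‖ ^ 2

/-- `‖⟨∇f, α⟩‖²_{L²(𝕋²)}` (modulo the factor `(2π)²`). -/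
noncomputable def dirSq (α : ℝ × ℝ) (a : ℤ × ℤ → ℂ) : ℝ :=
  ∑' k : ℤ × ℤ, (α.1 * k.1 + α.2 * k.2) ^ 2 * ‖a k‖ ^ 2

/-- `f ∈ H¹(𝕋²)`. -/
def IsH1 (a : ℤ × ℤ → ℂ) : Prop :=
  Summable (fun k : ℤ × ℤ => ‖a k‖ ^ 2) ∧
  Summable (fun k : ℤ × ℤ => (((k.1 : ℝ)) ^ 2 + ((k.2 : ℝ)) ^ 2) * ‖a k‖ ^ 2)

/-- `‖f‖²_{L²(𝕋²)}` with the Parseval constant `(2π)²` included. -/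
noncomputable def normSq' (a : ℤ × ℤ → ℂ) : ℝ := (2 * π) ^ 2 * normSq a

/-- `‖∇f‖²_{L²(𝕋²)}` with the Parseval constant `(2π)²` included. -/
noncomputable def gradSq' (a : ℤ × ℤ → ℂ) : ℝ := (2 * π) ^ 2 * gradSq a

/-- `‖⟨∇f,α⟩‖²_{L²(𝕋²)}` with the Parseval constant `(2π)²` included. -/
noncomputable def dirSq' (α : ℝ × ℝ) (a : ℤ × ℤ → ℂ) : ℝ := (2 * π) ^ 2 * dirSq α a

/-- Liouville's constant `L = Σ_{n≥1} 10^{-n!}`. -/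
noncomputable def liouville : ℝ := ∑' n : ℕ, ((10 : ℝ) ^ (n + 1).factorial)⁻¹

/-- Fourier coefficients of
`f_N(x,y) = sin(10^{N!}(Σ_{n=1}^N x 10^{-n!} - y)) = sin(K_N x - 10^{N!} y)`,
where `K_N = Σ_{n=1}^N 10^{N!-n!} ∈ ℤ`: mass `±1/(2i)` at `±(K_N, -10^{N!})`. -/
noncomputable def liouvilleCoeff (N : ℕ) : ℤ × ℤ → ℂ := fun m =>
  if m = ((∑ n ∈ Finset.Icc 1 N, (10 : ℤ) ^ (N.factorial - n.factorial)),
      -((10 : ℤ) ^ N.factorial)) then (2 * Complex.I)⁻¹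
  else if m = (-(∑ n ∈ Finset.Icc 1 N, (10 : ℤ) ^ (N.factorial - n.factorial)),
      (10 : ℤ) ^ N.factorial) then -(2 * Complex.I)⁻¹
  else 0


namespace LiouAux

def Kc (N : ℕ) : ℤ := ∑ n ∈ Finset.Icc 1 N, (10 : ℤ) ^ (N.factorial - n.factorial)
def pN (N : ℕ) : ℤ × ℤ := (Kc N, -((10 : ℤ) ^ N.factorial))
def qN (N : ℕ) : ℤ × ℤ := (-(Kc N), (10 : ℤ) ^ N.factorial)
noncomputable def S (N : ℕ) : ℝ :=
  ∑' n : ℕ, (10 : ℝ) ^ N.factorial * ((10 : ℝ) ^ (N + 1 + n).factorial)⁻¹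

lemma pq_ne (N : ℕ) : pN N ≠ qN N := by
  intro h
  have h2 := congrArg Prod.snd h
  simp only [pN, qN] at h2
  have : (0:ℤ) < 10 ^ N.factorial := by positivity
  omega

lemma coeff_p (N : ℕ) : liouvilleCoeff N (pN N) = (2 * Complex.I)⁻¹ := by
  simp [liouvilleCoeff, pN, Kc]

lemma coeff_q (N : ℕ) : liouvilleCoeff N (qN N) = -(2 * Complex.I)⁻¹ := by
  have h := pq_ne N
  simp only [liouvilleCoeff, pN, qN, Kc] at *
  simp only [Prod.mk.injEq]
  have hpos : (0:ℤ) < 10 ^ N.factorial := by positivity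
  rw [if_neg (by omega : ¬ _)]
  simp

lemma coeff_ne (N : ℕ) {m : ℤ × ℤ} (hp : m ≠ pN N) (hq : m ≠ qN N) :
    liouvilleCoeff N m = 0 := by
  simp only [liouvilleCoeff, pN, qN, Kc] at *
  rw [if_neg hp, if_neg hq]

lemma norm_sq_p (N : ℕ) : ‖liouvilleCoeff N (pN N)‖ ^ 2 = 1/4 := by
  rw [coeff_p]
  simp [norm_inv, Complex.norm_I]
  norm_num

lemma norm_sq_q (N : ℕ) : ‖liouvilleCoeff N (qN N)‖ ^ 2 = 1/4 := by
  rw [coeff_q]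
  simp [norm_inv, Complex.norm_I]
  norm_num

lemma tsum_weight (N : ℕ) (w : ℤ × ℤ → ℝ) :
    ∑' k : ℤ × ℤ, w k * ‖liouvilleCoeff N k‖ ^ 2 = (w (pN N) + w (qN N)) * (1/4) := by
  rw [tsum_eq_sum (s := {pN N, qN N}) ?_]
  · rw [Finset.sum_pair (pq_ne N), norm_sq_p, norm_sq_q]; ring
  · intro b hb
    simp only [Finset.mem_insert, Finset.mem_singleton, not_or] at hb
    rw [coeff_ne N hb.1 hb.2]
    simp

lemma summable_l : Summable (fun n : ℕ => ((10 : ℝ) ^ (n + 1).factorial)⁻¹) := by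
  apply Summable.of_nonneg_of_le (fun n => by positivity) (f := fun n => (1/10 : ℝ) ^ n)
  · intro n
    rw [one_div, inv_pow]
    apply inv_anti₀ (by positivity)
    exact pow_le_pow_right₀ (by norm_num) (le_trans (Nat.le_succ n) (Nat.self_le_factorial _))
  · exact summable_geometric_of_lt_one (by norm_num) (by norm_num)

lemma fact_ge (N n : ℕ) : (N+1).factorial + n ≤ (N+1+n).factorial := by
  induction n with
  | zero => simp
  | succ n ih =>
    have h1 : 1 ≤ (N+1+n).factorial := Nat.factorial_pos _
    have h2 : (N+1+(n+1)).factorial = (N+1+n+1) * (N+1+n).factorial := by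
      rw [show N+1+(n+1) = (N+1+n)+1 by ring, Nat.factorial_succ]
    nlinarith

lemma fact_ge' (N n : ℕ) : N.factorial + n ≤ (N+1+n).factorial := by
  have h1 := fact_ge N n
  have h2 := Nat.factorial_le (Nat.le_succ N)
  simp only [Nat.succ_eq_add_one] at h2
  omega

lemma term_le (N n : ℕ) :
    (10 : ℝ) ^ N.factorial * ((10 : ℝ) ^ (N + 1 + n).factorial)⁻¹ ≤ (1/10 : ℝ) ^ n := by
  have h : (10:ℝ) ^ (N.factorial + n) ≤ (10:ℝ) ^ (N+1+n).factorial :=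
    pow_le_pow_right₀ (by norm_num) (fact_ge' N n)
  rw [pow_add] at h
  rw [one_div, inv_pow, ← div_eq_mul_inv, ← one_div ((10:ℝ)^n),
    div_le_div_iff₀ (by positivity) (by positivity), one_mul]
  exact h

lemma summable_S (N : ℕ) :
    Summable (fun n : ℕ => (10 : ℝ) ^ N.factorial * ((10 : ℝ) ^ (N + 1 + n).factorial)⁻¹) := by
  apply Summable.of_nonneg_of_le (fun n => by positivity) (term_le N)
    (f := fun n => (1/10 : ℝ) ^ n)
  exact summable_geometric_of_lt_one (by norm_num) (by norm_num)

lemma Kc_eq (N : ℕ) :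
    (Kc N : ℝ) = (10:ℝ) ^ N.factorial * ∑ i ∈ Finset.range N, ((10:ℝ) ^ (i+1).factorial)⁻¹ := by
  rw [Kc]
  push_cast
  rw [Finset.mul_sum]
  rw [show Finset.Icc 1 N = Finset.Ico 1 (N+1) by rfl, Finset.sum_Ico_eq_sum_range]
  simp only [Nat.add_sub_cancel]
  apply Finset.sum_congr rfl
  intro i hi
  rw [Finset.mem_range] at hi
  have h1 : (1+i).factorial ≤ N.factorial := Nat.factorial_le (by omega)
  rw [pow_sub₀ (10:ℝ) (by norm_num) h1, show 1 + i = i + 1 by ring]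

lemma liouville_split (N : ℕ) :
    liouville = (∑ i ∈ Finset.range N, ((10:ℝ) ^ (i+1).factorial)⁻¹) +
      ∑' n : ℕ, ((10:ℝ) ^ (n + N + 1).factorial)⁻¹ := by
  rw [liouville, ← Summable.sum_add_tsum_nat_add N summable_l]

lemma key (N : ℕ) : liouville * (10:ℝ) ^ N.factorial - (Kc N : ℝ) = S N := by
  rw [Kc_eq, liouville_split N, S]
  rw [add_mul, mul_comm ((10:ℝ) ^ N.factorial), add_sub_cancel_left, ← tsum_mul_right]
  apply tsum_congr
  intro n
  rw [show n + N + 1 = N + 1 + n by ring]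
  ring

lemma S_nonneg (N : ℕ) : 0 ≤ S N := tsum_nonneg (fun n => by positivity)

lemma S_le (N : ℕ) (hN : 3 ≤ N) : S N ≤ ((10:ℝ) ^ (2 * N.factorial))⁻¹ * 2 := by
  have hterm : ∀ n : ℕ, (10:ℝ) ^ N.factorial * ((10:ℝ) ^ (N+1+n).factorial)⁻¹ ≤
      ((10:ℝ) ^ (2 * N.factorial))⁻¹ * (1/10:ℝ) ^ n := by
    intro n
    have hf : 3 * N.factorial + n ≤ (N+1+n).factorial := by
      have h1 := fact_ge N n
      have h2 : 4 * N.factorial ≤ (N+1).factorial := by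
        rw [Nat.factorial_succ]
        exact Nat.mul_le_mul_right _ (by omega)
      omega
    have h : (10:ℝ) ^ (3 * N.factorial + n) ≤ (10:ℝ) ^ (N+1+n).factorial :=
      pow_le_pow_right₀ (by norm_num) hf
    have h3 : (3:ℕ) * N.factorial + n = N.factorial + (2 * N.factorial + n) := by ring
    rw [h3, pow_add, pow_add] at h
    rw [one_div, inv_pow, ← div_eq_mul_inv, ← mul_inv,
      ← one_div ((10:ℝ)^(2*N.factorial) * (10:ℝ)^n),
      div_le_div_iff₀ (by positivity) (by positivity), one_mul]
    exact h
  have hsum : Summable (fun n : ℕ => ((10:ℝ) ^ (2 * N.factorial))⁻¹ * (1/10:ℝ) ^ n) :=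
    (summable_geometric_of_lt_one (by norm_num) (by norm_num)).mul_left _
  calc S N ≤ ∑' n : ℕ, ((10:ℝ) ^ (2 * N.factorial))⁻¹ * (1/10:ℝ) ^ n :=
        Summable.tsum_le_tsum hterm (summable_S N) hsum
    _ = ((10:ℝ) ^ (2 * N.factorial))⁻¹ * (10/9 : ℝ) := by
        rw [tsum_mul_left, tsum_geometric_of_lt_one (by norm_num) (by norm_num)]
        norm_num
    _ ≤ ((10:ℝ) ^ (2 * N.factorial))⁻¹ * 2 :=
        mul_le_mul_of_nonneg_left (by norm_num) (by positivity)

lemma Kc_le (N : ℕ) : (Kc N : ℝ) ≤ (10:ℝ) ^ N.factorial * (1/9) := by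
  rw [Kc_eq]
  apply mul_le_mul_of_nonneg_left ?_ (by positivity)
  calc ∑ i ∈ Finset.range N, ((10:ℝ) ^ (i+1).factorial)⁻¹
      ≤ ∑' n : ℕ, ((10:ℝ) ^ (n+1).factorial)⁻¹ :=
        Summable.sum_le_tsum _ (fun i _ => by positivity) summable_l
    _ ≤ ∑' n : ℕ, (1/10:ℝ) * (1/10:ℝ) ^ n := by
        apply Summable.tsum_le_tsum ?_ summable_l
          ((summable_geometric_of_lt_one (by norm_num) (by norm_num)).mul_left _)
        intro n
        calc ((10:ℝ) ^ (n+1).factorial)⁻¹ ≤ ((10:ℝ)^(n+1))⁻¹ := by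
              apply inv_anti₀ (by positivity)
              exact pow_le_pow_right₀ (by norm_num) (Nat.self_le_factorial _)
          _ = (1/10:ℝ) * (1/10:ℝ)^n := by
              rw [pow_succ]
              field_simp
              rw [← mul_pow]; norm_num
    _ = 1/9 := by
        rw [tsum_mul_left, tsum_geometric_of_lt_one (by norm_num) (by norm_num)]
        norm_num

lemma Kc_nonneg (N : ℕ) : (0:ℝ) ≤ (Kc N : ℝ) := by
  rw [Kc_eq]
  positivity

lemma normSq_val (N : ℕ) : normSq (liouvilleCoeff N) = 1/2 := by
  have h := tsum_weight N (fun _ => (1:ℝ))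
  simp only [one_mul] at h
  rw [normSq, h]; norm_num

lemma gradSq_val (N : ℕ) :
    gradSq (liouvilleCoeff N)
      = (((Kc N : ℝ))^2 + ((10:ℝ)^N.factorial)^2) * (1/2) := by
  have h := tsum_weight N (fun k : ℤ × ℤ => ((k.1:ℝ))^2 + ((k.2:ℝ))^2)
  rw [gradSq, h, pN, qN]
  push_cast
  ring

lemma dirSq_val (N : ℕ) :
    dirSq (1, liouville) (liouvilleCoeff N) = (S N)^2 * (1/2) := by
  have h := tsum_weight N
    (fun k : ℤ × ℤ => (((1:ℝ), liouville).1 * k.1 + ((1:ℝ), liouville).2 * k.2)^2)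
  rw [dirSq, h, pN, qN]
  have hk := key N
  have hK : (Kc N : ℝ) = liouville * (10:ℝ)^N.factorial - S N := by linarith
  push_cast [hK]
  ring

end LiouAux

/-- For `α = (1, L)` with `L` Liouville's constant and `N ≥ 3`:
`‖f_N‖² = 2π²`, `‖∇f_N‖ ≤ 6·10^{N!}`,
`‖⟨∇f_N,α⟩‖ = √(2π²) Σ_{n=N+1}^∞ 10^{N!-n!} ≤ 10^{-2 N!} √(2π²) · 2`;
consequently `‖∇f‖ ⬝ ‖⟨∇f,α⟩‖ ≥ c ‖f‖²` fails for `α = (1,L)` for every `c > 0`. -/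
theorem stmt_9 :
    (∀ N : ℕ, 3 ≤ N →
      normSq' (liouvilleCoeff N) = 2 * π ^ 2 ∧
      Real.sqrt (gradSq' (liouvilleCoeff N)) ≤ 6 * (10 : ℝ) ^ N.factorial ∧
      Real.sqrt (dirSq' (1, liouville) (liouvilleCoeff N))
        = Real.sqrt (2 * π ^ 2) *
            ∑' n : ℕ, (10 : ℝ) ^ N.factorial * ((10 : ℝ) ^ (N + 1 + n).factorial)⁻¹ ∧
      Real.sqrt (dirSq' (1, liouville) (liouvilleCoeff N))
        ≤ ((10 : ℝ) ^ (2 * N.factorial))⁻¹ * Real.sqrt (2 * π ^ 2) * 2) ∧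
    ∀ c > (0 : ℝ), ¬ (∀ a : ℤ × ℤ → ℂ, IsH1 a → a 0 = 0 →
      Real.sqrt (gradSq' a) * Real.sqrt (dirSq' (1, liouville) a)
        ≥ c * normSq' a) := by
  have main : ∀ N : ℕ, 3 ≤ N →
      normSq' (liouvilleCoeff N) = 2 * π ^ 2 ∧
      Real.sqrt (gradSq' (liouvilleCoeff N)) ≤ 6 * (10 : ℝ) ^ N.factorial ∧
      Real.sqrt (dirSq' (1, liouville) (liouvilleCoeff N))
        = Real.sqrt (2 * π ^ 2) *
            ∑' n : ℕ, (10 : ℝ) ^ N.factorial * ((10 : ℝ) ^ (N + 1 + n).factorial)⁻¹ ∧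
      Real.sqrt (dirSq' (1, liouville) (liouvilleCoeff N))
        ≤ ((10 : ℝ) ^ (2 * N.factorial))⁻¹ * Real.sqrt (2 * π ^ 2) * 2 := by
    intro N hN
    have hMpos : (0:ℝ) < (10:ℝ) ^ N.factorial := by positivity
    have hKle := LiouAux.Kc_le N
    have hK0 := LiouAux.Kc_nonneg N
    have hpi2 := Real.pi_lt_d2
    have hpi0 := Real.pi_pos
    have hdval : dirSq' (1, liouville) (liouvilleCoeff N)
        = (2 * π ^ 2) * (LiouAux.S N) ^ 2 := by
      rw [dirSq', LiouAux.dirSq_val]; ring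
    have hdir_eq : Real.sqrt (dirSq' (1, liouville) (liouvilleCoeff N))
        = Real.sqrt (2 * π ^ 2) * LiouAux.S N := by
      rw [hdval, Real.sqrt_mul (by positivity), Real.sqrt_sq (LiouAux.S_nonneg N)]
    refine ⟨?_, ?_, ?_, ?_⟩
    · rw [normSq', LiouAux.normSq_val]; ring
    · have hval : gradSq' (liouvilleCoeff N)
          = (2*π)^2 * ((((LiouAux.Kc N : ℝ))^2 + ((10:ℝ)^N.factorial)^2) * (1/2)) := by
        rw [gradSq', LiouAux.gradSq_val]
      have hle : gradSq' (liouvilleCoeff N) ≤ (6 * (10:ℝ)^N.factorial)^2 := by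
        rw [hval]
        have hpisq : π ^ 2 < 10 := by nlinarith
        nlinarith [mul_le_mul hKle hKle hK0 (by positivity : (0:ℝ) ≤ (10:ℝ)^N.factorial * (1/9)),
          sq_nonneg ((10:ℝ)^N.factorial)]
      calc Real.sqrt (gradSq' (liouvilleCoeff N))
          ≤ Real.sqrt ((6 * (10:ℝ)^N.factorial)^2) := Real.sqrt_le_sqrt hle
        _ = 6 * (10:ℝ)^N.factorial := Real.sqrt_sq (by positivity)
    · rw [hdir_eq, LiouAux.S]
    · calc Real.sqrt (dirSq' (1, liouville) (liouvilleCoeff N))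
          = Real.sqrt (2 * π ^ 2) * LiouAux.S N := hdir_eq
        _ ≤ Real.sqrt (2 * π ^ 2) * (((10:ℝ) ^ (2 * N.factorial))⁻¹ * 2) :=
            mul_le_mul_of_nonneg_left (LiouAux.S_le N hN) (Real.sqrt_nonneg _)
        _ = ((10:ℝ) ^ (2 * N.factorial))⁻¹ * Real.sqrt (2 * π ^ 2) * 2 := by ring
  refine ⟨main, ?_⟩
  intro c hc h
  obtain ⟨N₀, hN₀⟩ := exists_nat_gt (60 / (c * (2 * π ^ 2)))
  set N := max 3 N₀ with hNdef
  have hN3 : 3 ≤ N := le_max_left _ _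
  obtain ⟨h1, h2, h3, h4⟩ := main N hN3
  have hH1 : IsH1 (liouvilleCoeff N) := by
    constructor
    · apply summable_of_ne_finset_zero (s := {LiouAux.pN N, LiouAux.qN N})
      intro b hb
      simp only [Finset.mem_insert, Finset.mem_singleton, not_or] at hb
      rw [LiouAux.coeff_ne N hb.1 hb.2]
      simp
    · apply summable_of_ne_finset_zero (s := {LiouAux.pN N, LiouAux.qN N})
      intro b hb
      simp only [Finset.mem_insert, Finset.mem_singleton, not_or] at hb
      rw [LiouAux.coeff_ne N hb.1 hb.2]
      simp
  have hzp : (0:ℤ) < 10 ^ N.factorial := by positivity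
  have h0 : liouvilleCoeff N 0 = 0 := by
    apply LiouAux.coeff_ne N
    · intro hh
      have := congrArg Prod.snd hh
      simp only [LiouAux.pN, Prod.snd_zero] at this
      omega
    · intro hh
      have := congrArg Prod.snd hh
      simp only [LiouAux.qN, Prod.snd_zero] at this
      omega
  have hineq := h (liouvilleCoeff N) hH1 h0
  rw [h1] at hineq
  have hpi0 := Real.pi_pos
  have hpi2 := Real.pi_lt_d2
  have hXpos : (0:ℝ) < (10:ℝ) ^ N.factorial := by positivity
  have hX : (N₀ : ℝ) ≤ (10:ℝ) ^ N.factorial := by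
    have hnat : N₀ ≤ 10 ^ N.factorial :=
      le_trans (le_max_right 3 N₀) (le_trans (Nat.self_le_factorial N)
        (le_of_lt (Nat.lt_pow_self (by norm_num))))
    calc (N₀ : ℝ) ≤ ((10 ^ N.factorial : ℕ) : ℝ) := by exact_mod_cast hnat
      _ = (10:ℝ) ^ N.factorial := by push_cast; ring
  have hsq5 : Real.sqrt (2 * π ^ 2) ≤ 5 := by
    have h25 : (2:ℝ) * π ^ 2 ≤ 25 := by nlinarith
    calc Real.sqrt (2 * π ^ 2) ≤ Real.sqrt 25 := Real.sqrt_le_sqrt h25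
      _ = 5 := by
          rw [show (25:ℝ) = 5^2 by norm_num, Real.sqrt_sq (by norm_num)]
  have hprod : Real.sqrt (gradSq' (liouvilleCoeff N)) *
      Real.sqrt (dirSq' (1, liouville) (liouvilleCoeff N))
      ≤ (6 * (10:ℝ)^N.factorial) *
        (((10:ℝ) ^ (2 * N.factorial))⁻¹ * Real.sqrt (2 * π ^ 2) * 2) :=
    mul_le_mul h2 h4 (Real.sqrt_nonneg _) (by positivity)
  have hpow : ((10:ℝ) ^ (2 * N.factorial))⁻¹
      = ((10:ℝ)^N.factorial)⁻¹ * ((10:ℝ)^N.factorial)⁻¹ := by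
    rw [two_mul, pow_add, mul_inv]
  have hsimp : (6 * (10:ℝ)^N.factorial) *
      ((((10:ℝ)^N.factorial)⁻¹ * ((10:ℝ)^N.factorial)⁻¹) * Real.sqrt (2 * π ^ 2) * 2)
      = 12 * Real.sqrt (2 * π ^ 2) * ((10:ℝ)^N.factorial)⁻¹ := by
    field_simp
    ring
  rw [hpow, hsimp] at hprod
  have hb : 12 * Real.sqrt (2 * π ^ 2) * ((10:ℝ)^N.factorial)⁻¹
      ≤ 60 * ((10:ℝ)^N.factorial)⁻¹ := by
    have : (0:ℝ) ≤ ((10:ℝ)^N.factorial)⁻¹ := by positivity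
    nlinarith [Real.sqrt_nonneg (2 * π ^ 2)]
  have hlast : 60 * ((10:ℝ)^N.factorial)⁻¹ < c * (2 * π ^ 2) := by
    rw [← div_eq_mul_inv, div_lt_iff₀ hXpos]
    have hpos : (0:ℝ) < c * (2 * π ^ 2) := by positivity
    rw [div_lt_iff₀ hpos] at hN₀
    nlinarith
  linarith
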